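/- Let ρ > 0, Δ_ρ = ρℤ^d, let M ⊂ Δ_ρ be a finite (compact) nonempty set of grid points, and let γ* satisfy ρ/2 < γ* < ρ. Define M̂ := B_{γ*}(M)_∞ = {x ∈ ℝ^d : dist∞(x,M) ≤ γ*}. Then M̂ is compact and dist_H(∂M̂, ∂⁰_ρ M)_∞ ≤ γ*, where ∂⁰_ρ M := {a ∈ M : ∃ x ∈ Δ_ρ \ M with |x − a|∞ = ρ} is the discrete boundary of M. -/

import Mathlib

open Metric Set

/-- The grid `ρ ℤ^d` of spacing `ρ` in `ℝ^d`. -/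
def grid (ρ : ℝ) (d : ℕ) : Set (Fin d → ℝ) :=
  {x | ∀ i, ∃ k : ℤ, x i = ρ * k}

/-- The discrete boundary of a set of grid points. -/
def discreteBoundary (ρ : ℝ) {d : ℕ} (M : Set (Fin d → ℝ)) : Set (Fin d → ℝ) :=
  {a ∈ M | ∃ x ∈ grid ρ d \ M, dist x a = ρ}

lemma grid_coord {ρ : ℝ} {d : ℕ} {x a : Fin d → ℝ} (hx : x ∈ grid ρ d)
    (ha : a ∈ grid ρ d) (i : Fin d) : ∃ k : ℤ, x i - a i = ρ * k := by
  obtain ⟨k, hk⟩ := hx i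
  obtain ⟨l, hl⟩ := ha i
  exact ⟨k - l, by rw [hk, hl]; push_cast; ring⟩

lemma grid_dist_lower {ρ : ℝ} (hρ : 0 < ρ) {d : ℕ} {x a : Fin d → ℝ}
    (hx : x ∈ grid ρ d) (ha : a ∈ grid ρ d) (hne : x ≠ a) : ρ ≤ dist x a := by
  have hex : ∃ i, x i ≠ a i := by
    by_contra h; push_neg at h; exact hne (funext h)
  obtain ⟨i, hi⟩ := hex
  obtain ⟨k, hk⟩ := grid_coord hx ha i
  have hk0 : k ≠ 0 := by
    rintro rfl
    simp only [Int.cast_zero, mul_zero, sub_eq_zero] at hk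
    exact hi hk
  have h1 : (1 : ℝ) ≤ |(k : ℝ)| := by
    have := Int.one_le_abs hk0
    calc (1 : ℝ) ≤ ((|k| : ℤ) : ℝ) := by exact_mod_cast this
    _ = |(k : ℝ)| := by push_cast; ring
  calc ρ = ρ * 1 := by ring
  _ ≤ ρ * |(k : ℝ)| := by nlinarith
  _ = |ρ * k| := by rw [abs_mul, abs_of_pos hρ]
  _ = |x i - a i| := by rw [hk]
  _ = dist (x i) (a i) := (Real.dist_eq _ _).symm
  _ ≤ dist x a := dist_le_pi_dist x a i

lemma grid_dist_eq {ρ : ℝ} (hρ : 0 < ρ) {d : ℕ} {x a : Fin d → ℝ}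
    (hx : x ∈ grid ρ d) (ha : a ∈ grid ρ d) (hne : x ≠ a)
    (hlt : dist x a < 2 * ρ) : dist x a = ρ := by
  refine le_antisymm ?_ (grid_dist_lower hρ hx ha hne)
  rw [dist_pi_le_iff hρ.le]
  intro i
  obtain ⟨k, hk⟩ := grid_coord hx ha i
  rw [Real.dist_eq, hk, abs_mul, abs_of_pos hρ]
  rcases le_or_gt (|(k : ℝ)|) 1 with h | h
  · nlinarith
  · exfalso
    have h2 : (2 : ℝ) ≤ |(k : ℝ)| := by
      have : (1 : ℤ) < |k| := by
        by_contra hc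
        push_neg at hc
        have : |(k : ℝ)| ≤ 1 := by
          calc |(k : ℝ)| = ((|k| : ℤ) : ℝ) := by push_cast; ring
          _ ≤ 1 := by exact_mod_cast hc
        linarith
      have : (2 : ℤ) ≤ |k| := this
      calc (2 : ℝ) = ((2 : ℤ) : ℝ) := by norm_num
      _ ≤ ((|k| : ℤ) : ℝ) := by exact_mod_cast this
      _ = |(k : ℝ)| := by push_cast; ring
    have hcoord : 2 * ρ ≤ dist (x i) (a i) := by
      rw [Real.dist_eq, hk, abs_mul, abs_of_pos hρ]
      nlinarith
    have := dist_le_pi_dist x a i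
    linarith

lemma exists_grid_near {ρ : ℝ} (hρ : 0 < ρ) {d : ℕ} (y : Fin d → ℝ) :
    ∃ g ∈ grid ρ d, dist y g ≤ ρ / 2 := by
  refine ⟨fun i => ρ * round (y i / ρ), fun i => ⟨round (y i / ρ), rfl⟩, ?_⟩
  rw [dist_pi_le_iff (by positivity)]
  intro i
  rw [Real.dist_eq]
  have h1 : |y i / ρ - round (y i / ρ)| ≤ 1 / 2 := abs_sub_round _
  have h2 : y i - ρ * round (y i / ρ) = ρ * (y i / ρ - round (y i / ρ)) := by
    field_simp
  rw [h2, abs_mul, abs_of_pos hρ]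
  nlinarith

theorem stmt9 {d : ℕ} (ρ γ : ℝ) (hρ : 0 < ρ) (hγ1 : ρ / 2 < γ) (hγ2 : γ < ρ)
    (M : Set (Fin d → ℝ)) (hMfin : M.Finite) (hMne : M.Nonempty)
    (hMgrid : M ⊆ grid ρ d) :
    IsCompact {x : Fin d → ℝ | infDist x M ≤ γ} ∧
    hausdorffDist (frontier {x : Fin d → ℝ | infDist x M ≤ γ})
      (discreteBoundary ρ M) ≤ γ := by
  have hγ0 : 0 < γ := by linarith
  set S : Set (Fin d → ℝ) := {x | infDist x M ≤ γ} with hS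
  -- compactness
  have hScomp : IsCompact S := by
    have hEq : S = cthickening γ M := by
      ext x
      rw [mem_cthickening_iff]
      show infDist x M ≤ γ ↔ _
      rw [infDist]
      exact (ENNReal.le_ofReal_iff_toReal_le (infEdist_ne_top hMne) hγ0.le).symm
    rw [hEq]
    exact hMfin.isCompact.cthickening
  refine ⟨hScomp, ?_⟩
  have hSclosed : IsClosed S := isClosed_le (continuous_infDist_pt M) continuous_const
  -- frontier points are at distance exactly γ from M
  have hfront : ∀ y ∈ frontier S, infDist y M = γ := by
    intro y hy
    have h1 : infDist y M ≤ γ := by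
      have := frontier_subset_closure (s := S) hy
      rw [hSclosed.closure_eq] at this
      exact this
    have h2 : γ ≤ infDist y M := by
      have hyc : y ∈ closure Sᶜ := by
        have : y ∈ frontier Sᶜ := by rw [frontier_compl]; exact hy
        exact frontier_subset_closure this
      have hcompl : Sᶜ = {x : Fin d → ℝ | γ < infDist x M} := by
        ext x; simp [hS, not_le]
      rw [hcompl] at hyc
      have := closure_lt_subset_le continuous_const (continuous_infDist_pt M) hyc
      exact this
    linarith
  -- grid points not in M are far from M
  have hfar : ∀ x ∈ grid ρ d, x ∉ M → ∀ m ∈ M, ρ ≤ dist m x := by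
    intro x hxg hxM m hm
    rw [dist_comm]
    exact grid_dist_lower hρ hxg (hMgrid hm) (fun h => hxM (h ▸ hm))
  -- part (a)
  have H1 : ∀ y ∈ frontier S, infDist y (discreteBoundary ρ M) ≤ γ := by
    intro y hy
    have hyγ := hfront y hy
    obtain ⟨a, haM, hay⟩ := hMfin.isCompact.exists_infDist_eq_dist hMne y
    have hya : dist y a = γ := by rw [← hay, hyγ]
    obtain ⟨g, hg, hyg⟩ := exists_grid_near hρ y
    have hgM : g ∉ M := by
      intro h
      have := infDist_le_dist_of_mem (x := y) h
      rw [hyγ] at this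
      linarith
    have hag : a ≠ g := fun h => hgM (h ▸ haM)
    have hdistag : dist a g = ρ := by
      refine grid_dist_eq hρ (hMgrid haM) hg hag ?_
      calc dist a g ≤ dist a y + dist y g := dist_triangle a y g
      _ = γ + dist y g := by rw [dist_comm a y, hya]
      _ ≤ γ + ρ / 2 := by linarith
      _ < 2 * ρ := by linarith
    have haB : a ∈ discreteBoundary ρ M :=
      ⟨haM, g, ⟨hg, hgM⟩, by rw [dist_comm]; exact hdistag⟩
    calc infDist y (discreteBoundary ρ M) ≤ dist y a := infDist_le_dist_of_mem haB
    _ = γ := hya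
  -- part (b)
  have H2 : ∀ a ∈ discreteBoundary ρ M, infDist a (frontier S) ≤ γ := by
    rintro a ⟨haM, x, ⟨hxg, hxM⟩, hxa⟩
    have hnormxa : ‖x - a‖ = ρ := by rw [← dist_eq_norm]; exact hxa
    set z : Fin d → ℝ := a + (γ / ρ) • (x - a) with hz
    have hza : dist z a = γ := by
      rw [dist_eq_norm]
      have : z - a = (γ / ρ) • (x - a) := by rw [hz]; abel
      rw [this, norm_smul, hnormxa, Real.norm_eq_abs, abs_of_pos (by positivity)]
      field_simp
    have hzx : dist z x = ρ - γ := by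
      rw [dist_eq_norm]
      have : z - x = (γ / ρ - 1) • (x - a) := by
        rw [hz]; rw [sub_smul, one_smul]; abel
      rw [this, norm_smul, hnormxa, Real.norm_eq_abs]
      have : |γ / ρ - 1| = 1 - γ / ρ := by
        rw [abs_of_nonpos]
        · ring
        · have : γ / ρ < 1 := (div_lt_one hρ).mpr hγ2
          linarith
      rw [this]
      field_simp
    have hzS : z ∈ S := by
      show infDist z M ≤ γ
      calc infDist z M ≤ dist z a := infDist_le_dist_of_mem haM
      _ = γ := hza
    have hzC : z ∈ closure Sᶜ := by
      rw [Metric.mem_closure_iff]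
      intro ε hε
      set δ : ℝ := min ((ρ - γ) / 2) (ε / 2) with hδdef
      have hδ0 : 0 < δ := lt_min (by linarith) (by linarith)
      have hδ1 : δ ≤ (ρ - γ) / 2 := min_le_left _ _
      have hδ2 : δ ≤ ε / 2 := min_le_right _ _
      set w : Fin d → ℝ := a + ((γ + δ) / ρ) • (x - a) with hw
      refine ⟨w, ?_, ?_⟩
      · -- w ∉ S
        show w ∈ Sᶜ
        simp only [mem_compl_iff, hS, mem_setOf_eq, not_le]
        have hwx : dist w x = ρ - (γ + δ) := by
          rw [dist_eq_norm]
          have : w - x = ((γ + δ) / ρ - 1) • (x - a) := by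
            rw [hw]; rw [sub_smul, one_smul]; abel
          rw [this, norm_smul, hnormxa, Real.norm_eq_abs]
          have : |(γ + δ) / ρ - 1| = 1 - (γ + δ) / ρ := by
            rw [abs_of_nonpos]
            · ring
            · have : (γ + δ) / ρ ≤ 1 := by
                rw [div_le_one hρ]; linarith
              linarith
          rw [this]
          field_simp
        have hlow : γ + δ ≤ infDist w M := by
          by_contra hc
          push_neg at hc
          obtain ⟨m, hm, hmw⟩ := (infDist_lt_iff hMne).mp hc
          have h1 : ρ ≤ dist m x := hfar x hxg hxM m hm
          have h2 : dist m x ≤ dist m w + dist w x := dist_triangle m w x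
          rw [dist_comm m w] at h2
          rw [hwx] at h2
          linarith
        linarith
      · -- dist z w < ε
        have : dist z w = δ := by
          rw [dist_eq_norm]
          have : z - w = (γ / ρ - (γ + δ) / ρ) • (x - a) := by
            rw [hz, hw, sub_smul]; abel
          rw [this, norm_smul, hnormxa, Real.norm_eq_abs]
          have heq : γ / ρ - (γ + δ) / ρ = -(δ / ρ) := by field_simp; ring
          rw [heq, abs_neg, abs_of_pos (by positivity)]
          field_simp
        rw [this]
        linarith
    have hzF : z ∈ frontier S := by
      rw [frontier_eq_closure_inter_closure]
      exact ⟨subset_closure hzS, hzC⟩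
    calc infDist a (frontier S) ≤ dist a z := infDist_le_dist_of_mem hzF
    _ = γ := by rw [dist_comm]; exact hza
  exact hausdorffDist_le_of_infDist hγ0.le H1 H2
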